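/- arXiv:1506.07248 — 4 statements merged into one kernel-verified Lean document; each statement's English description precedes it below -/
import Mathlib

section
/- The packing chromatic number of the corona P_n ⊙ K_1 equals 2 if n = 1, 3 if n ∈ {2,3}, 4 if 4 ≤ n ≤ 9, and 5 if n ≥ 10. -/
open SimpleGraph

/-- A packing `k`-coloring of a graph: colors in `{1,…,k}`, and distinct vertices
with the same color `i` are at distance greater than `i`. -/
def IsPackingColoring {V : Type*} (G : SimpleGraph V) (k : ℕ) (c : V → ℕ) : Prop :=
  (∀ v, 1 ≤ c v ∧ c v ≤ k) ∧
  ∀ u v : V, u ≠ v → c u = c v → (c u : ℕ∞) < G.edist u v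

/-- The packing chromatic number. -/
noncomputable def packingChromaticNumber {V : Type*} (G : SimpleGraph V) : ℕ :=
  sInf {k | ∃ c, IsPackingColoring G k c}

/-- The generalized corona `G ⊙ pK₁`: add `p` pendant neighbors to each vertex. -/
def genCorona {V : Type*} (G : SimpleGraph V) (p : ℕ) : SimpleGraph (V ⊕ V × Fin p) where
  Adj x y :=
    (∃ u v, x = Sum.inl u ∧ y = Sum.inl v ∧ G.Adj u v) ∨
    (∃ u j, x = Sum.inl u ∧ y = Sum.inr (u, j)) ∨
    (∃ u j, x = Sum.inr (u, j) ∧ y = Sum.inl u)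
  symm := by
    constructor
    rintro x y (⟨u, v, rfl, rfl, h⟩ | ⟨u, j, rfl, rfl⟩ | ⟨u, j, rfl, rfl⟩)
    · exact Or.inl ⟨v, u, rfl, rfl, h.symm⟩
    · exact Or.inr (Or.inr ⟨u, j, rfl, rfl⟩)
    · exact Or.inr (Or.inl ⟨u, j, rfl, rfl⟩)
  loopless := by
    constructor
    rintro x (⟨u, v, rfl, h1, h⟩ | ⟨u, j, rfl, h1⟩ | ⟨u, j, rfl, h1⟩)
    · cases h1; exact G.irrefl h
    · exact absurd h1 (by simp)
    · exact absurd h1 (by simp)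

/-- `A` is an orientation of `G`: each edge gets exactly one direction. -/
def IsOrientation {V : Type*} (G : SimpleGraph V) (A : V → V → Prop) : Prop :=
  (∀ u v, A u v → ¬ A v u) ∧ (∀ u v, G.Adj u v ↔ (A u v ∨ A v u))

/-- Existence of a directed path of length `n` from `u` to `v`. -/
def DPath {V : Type*} (A : V → V → Prop) : ℕ → V → V → Prop
  | 0, u, v => u = v
  | (n+1), u, v => ∃ w, A u w ∧ DPath A n w v

/-- The weak directed distance: length of a shortest directed path joining `u` and `v`
in either direction. -/
noncomputable def wdist {V : Type*} (A : V → V → Prop) (u v : V) : ℕ∞ :=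
  sInf {m : ℕ∞ | ∃ n : ℕ, m = n ∧ (DPath A n u v ∨ DPath A n v u)}

/-- A packing `k`-coloring of a digraph, w.r.t. the weak directed distance. -/
def IsDPackingColoring {V : Type*} (A : V → V → Prop) (k : ℕ) (c : V → ℕ) : Prop :=
  (∀ v, 1 ≤ c v ∧ c v ≤ k) ∧
  ∀ u v : V, u ≠ v → c u = c v → (c u : ℕ∞) < wdist A u v

/-- The packing chromatic number of a digraph. -/
noncomputable def dPackingChromaticNumber {V : Type*} (A : V → V → Prop) : ℕ :=
  sInf {k | ∃ c, IsDPackingColoring A k c}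

/-- A source: no incoming arcs. -/
def IsSource {V : Type*} (A : V → V → Prop) (v : V) : Prop := ∀ u, ¬ A u v

/-- A sink: no outgoing arcs. -/
def IsSink {V : Type*} (A : V → V → Prop) (v : V) : Prop := ∀ u, ¬ A v u

namespace CPX

def idx {n : ℕ} : Fin n ⊕ Fin n × Fin 1 → ℕ
  | .inl i => i.val
  | .inr (i, _) => i.val

def pen {n : ℕ} : Fin n ⊕ Fin n × Fin 1 → ℕ
  | .inl _ => 0
  | .inr _ => 1

def D {n : ℕ} (u v : Fin n ⊕ Fin n × Fin 1) : ℕ :=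
  if idx u = idx v ∧ pen u = pen v then 0 else Nat.dist (idx u) (idx v) + pen u + pen v

lemma eq_iff {n : ℕ} {u v : Fin n ⊕ Fin n × Fin 1} :
    u = v ↔ idx u = idx v ∧ pen u = pen v := by
  rcases u with i | ⟨i, ji⟩ <;> rcases v with m | ⟨m, jm⟩
  · simp [idx, pen, Fin.ext_iff]
  · simp [idx, pen]
  · simp [idx, pen]
  · have := ji.isLt; have := jm.isLt
    simp [idx, pen, Prod.ext_iff, Fin.ext_iff]
    try omega

lemma D_comm {n : ℕ} (u v : Fin n ⊕ Fin n × Fin 1) : D u v = D v u := by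
  unfold D
  simp only [Nat.dist]
  split_ifs with h1 h2 h2 <;> omega

lemma step {n : ℕ} {u u' v : Fin n ⊕ Fin n × Fin 1}
    (h : (genCorona (pathGraph n) 1).Adj u u') : D u v ≤ D u' v + 1 := by
  have hd : Nat.dist (idx u) (idx u') + pen u + pen u' ≤ 1 := by
    obtain (⟨a, b, rfl, rfl, hab⟩ | ⟨a, j, rfl, rfl⟩ | ⟨a, j, rfl, rfl⟩) := h
    · rw [pathGraph_adj] at hab
      simp only [idx, pen, Nat.dist]
      omega
    · simp [idx, pen, Nat.dist]
    · simp [idx, pen, Nat.dist]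
  unfold D
  simp only [Nat.dist] at *
  split_ifs with g1 g2 g2 <;> omega

lemma D_le_length {n : ℕ} {u v : Fin n ⊕ Fin n × Fin 1}
    (w : (genCorona (pathGraph n) 1).Walk u v) : D u v ≤ w.length := by
  induction w with
  | nil => simp [D]
  | cons h p ih =>
      rw [SimpleGraph.Walk.length_cons]
      exact le_trans (step h) (by omega)

lemma D_le_edist {n : ℕ} (u v : Fin n ⊕ Fin n × Fin 1) :
    (D u v : ℕ∞) ≤ (genCorona (pathGraph n) 1).edist u v :=
  le_iInf fun w => by exact_mod_cast D_le_length w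

lemma adj_inl {n : ℕ} {i j : Fin n} (h : i.val + 1 = j.val) :
    (genCorona (pathGraph n) 1).Adj (Sum.inl i) (Sum.inl j) :=
  Or.inl ⟨i, j, rfl, rfl, pathGraph_adj.2 (Or.inl h)⟩

lemma adj_pend {n : ℕ} {i : Fin n} {j : Fin 1} :
    (genCorona (pathGraph n) 1).Adj (Sum.inl i) (Sum.inr (i, j)) :=
  Or.inr (Or.inl ⟨i, j, rfl, rfl⟩)

lemma edist_inl_le {n : ℕ} : ∀ (k : ℕ) (i j : Fin n), i.val + k = j.val →
    (genCorona (pathGraph n) 1).edist (Sum.inl i) (Sum.inl j) ≤ (k : ℕ∞) := by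
  intro k
  induction k with
  | zero =>
      intro i j h
      have : i = j := Fin.ext (by omega)
      subst this
      simp [SimpleGraph.edist_self]
  | succ k ih =>
      intro i j h
      have hlt : i.val + 1 < n := by omega
      set i' : Fin n := ⟨i.val + 1, hlt⟩ with hi'
      have h1 : (genCorona (pathGraph n) 1).edist (Sum.inl i) (Sum.inl i') ≤ 1 :=
        le_of_eq (SimpleGraph.edist_eq_one_iff_adj.2 (adj_inl rfl))
      have h2 := ih i' j (by simp [hi']; omega)
      calc (genCorona (pathGraph n) 1).edist (Sum.inl i) (Sum.inl j)
          ≤ _ + _ := SimpleGraph.edist_triangle (v := Sum.inl i')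
        _ ≤ 1 + (k : ℕ∞) := add_le_add h1 h2
        _ = ((k+1 : ℕ) : ℕ∞) := by push_cast; ring

lemma edist_inl_inl {n : ℕ} (i m : Fin n) :
    (genCorona (pathGraph n) 1).edist (Sum.inl i) (Sum.inl m) ≤ (Nat.dist i.val m.val : ℕ∞) := by
  rcases le_total i.val m.val with h | h
  · have := edist_inl_le (m.val - i.val) i m (by omega)
    have hd : Nat.dist i.val m.val = m.val - i.val := by simp [Nat.dist]; omega
    rwa [hd]
  · have := edist_inl_le (i.val - m.val) m i (by omega)
    have hd : Nat.dist i.val m.val = i.val - m.val := by simp [Nat.dist]; omega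
    rw [hd, SimpleGraph.edist_comm]
    exact this

lemma edist_le_D {n : ℕ} (u v : Fin n ⊕ Fin n × Fin 1) :
    (genCorona (pathGraph n) 1).edist u v ≤ (D u v : ℕ∞) := by
  have pend_le : ∀ (i : Fin n) (j : Fin 1) (w : Fin n ⊕ Fin n × Fin 1),
      (genCorona (pathGraph n) 1).edist (Sum.inr (i, j)) w ≤
        1 + (genCorona (pathGraph n) 1).edist (Sum.inl i) w := by
    intro i j w
    calc (genCorona (pathGraph n) 1).edist (Sum.inr (i, j)) w
        ≤ _ + _ := SimpleGraph.edist_triangle (v := Sum.inl i)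
      _ ≤ 1 + (genCorona (pathGraph n) 1).edist (Sum.inl i) w := by
          gcongr
          rw [SimpleGraph.edist_comm]
          exact le_of_eq (SimpleGraph.edist_eq_one_iff_adj.2 adj_pend)
  rcases u with i | ⟨i, ji⟩ <;> rcases v with m | ⟨m, jm⟩
  · rcases eq_or_ne i m with rfl | hne
    · simp [SimpleGraph.edist_self, D, idx, pen]
    · have hD : D (Sum.inl i : Fin n ⊕ Fin n × Fin 1) (Sum.inl m) = Nat.dist i.val m.val := by
        simp only [D, idx, pen]
        have hne' : i.val ≠ m.val := fun h => hne (Fin.ext h)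
        rw [if_neg] <;> omega
      rw [hD]
      exact edist_inl_inl i m
  · have hD : D (Sum.inl i : Fin n ⊕ Fin n × Fin 1) (Sum.inr (m, jm)) = Nat.dist i.val m.val + 1 := by
      unfold D; rw [if_neg (by simp [idx, pen])]
      simp [idx, pen]
    rw [hD, SimpleGraph.edist_comm]
    calc (genCorona (pathGraph n) 1).edist (Sum.inr (m, jm)) (Sum.inl i)
        ≤ 1 + (genCorona (pathGraph n) 1).edist (Sum.inl m) (Sum.inl i) := pend_le m jm _
      _ ≤ 1 + (Nat.dist m.val i.val : ℕ∞) := by gcongr; exact edist_inl_inl m i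
      _ = ((Nat.dist i.val m.val + 1 : ℕ) : ℕ∞) := by rw [Nat.dist_comm]; push_cast; ring
  · have hD : D (Sum.inr (i, ji) : Fin n ⊕ Fin n × Fin 1) (Sum.inl m) = Nat.dist i.val m.val + 1 := by
      unfold D; rw [if_neg (by simp [idx, pen])]
      simp [idx, pen]
    rw [hD]
    calc (genCorona (pathGraph n) 1).edist (Sum.inr (i, ji)) (Sum.inl m)
        ≤ 1 + (genCorona (pathGraph n) 1).edist (Sum.inl i) (Sum.inl m) := pend_le i ji _
      _ ≤ 1 + (Nat.dist i.val m.val : ℕ∞) := by gcongr; exact edist_inl_inl i m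
      _ = ((Nat.dist i.val m.val + 1 : ℕ) : ℕ∞) := by push_cast; ring
  · rcases eq_or_ne i m with rfl | hne
    · have : ji = jm := Subsingleton.elim _ _
      subst this
      simp [SimpleGraph.edist_self, D]
    · have hD : D (Sum.inr (i, ji) : Fin n ⊕ Fin n × Fin 1) (Sum.inr (m, jm)) =
          Nat.dist i.val m.val + 2 := by
        simp only [D, idx, pen]
        have hne' : i.val ≠ m.val := fun h => hne (Fin.ext h)
        rw [if_neg] <;> omega
      rw [hD]
      calc (genCorona (pathGraph n) 1).edist (Sum.inr (i, ji)) (Sum.inr (m, jm))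
          ≤ 1 + (genCorona (pathGraph n) 1).edist (Sum.inl i) (Sum.inr (m, jm)) := pend_le i ji _
        _ ≤ 1 + ((genCorona (pathGraph n) 1).edist (Sum.inl i) (Sum.inl m) + 1) := by
            gcongr
            rw [SimpleGraph.edist_comm]
            calc (genCorona (pathGraph n) 1).edist (Sum.inr (m, jm)) (Sum.inl i)
                ≤ 1 + (genCorona (pathGraph n) 1).edist (Sum.inl m) (Sum.inl i) := pend_le m jm _
              _ = (genCorona (pathGraph n) 1).edist (Sum.inl i) (Sum.inl m) + 1 := by
                  rw [SimpleGraph.edist_comm]; ring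
        _ ≤ 1 + ((Nat.dist i.val m.val : ℕ∞) + 1) := by gcongr; exact edist_inl_inl i m
        _ = ((Nat.dist i.val m.val + 2 : ℕ) : ℕ∞) := by push_cast; ring

lemma edist_eq_D {n : ℕ} (u v : Fin n ⊕ Fin n × Fin 1) :
    (genCorona (pathGraph n) 1).edist u v = (D u v : ℕ∞) :=
  le_antisymm (edist_le_D u v) (D_le_edist u v)

lemma packing_iff {n k : ℕ} {c : Fin n ⊕ Fin n × Fin 1 → ℕ} :
    IsPackingColoring (genCorona (pathGraph n) 1) k c ↔
      ((∀ v, 1 ≤ c v ∧ c v ≤ k) ∧ ∀ u v, u ≠ v → c u = c v → c u < D u v) := by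
  unfold IsPackingColoring
  refine and_congr Iff.rfl
    (forall_congr' fun u => forall_congr' fun v => imp_congr Iff.rfl (imp_congr Iff.rfl ?_))
  rw [edist_eq_D]
  exact Nat.cast_lt

def okp (d : ℕ) (p q : ℕ × ℕ) : Bool :=
  p.1 == 0 ||
  ((p.1 != q.1 || decide (p.1 < d)) && (p.1 != q.2 || decide (p.1 < d + 1)) &&
   (p.2 != q.1 || decide (p.2 < d + 1)) && (p.2 != q.2 || decide (p.2 < d + 2)))

def compat (l : List (ℕ × ℕ)) (q : ℕ × ℕ) : Bool :=
  (q.1 != q.2) && okp 1 (l.getD 0 (0,0)) q && okp 2 (l.getD 1 (0,0)) q &&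
    okp 3 (l.getD 2 (0,0)) q && okp 4 (l.getD 3 (0,0)) q

def search (k : ℕ) : ℕ → List (ℕ × ℕ) → Bool
  | 0, _ => true
  | m+1, l => (List.range k).any fun a => (List.range k).any fun b =>
      compat l (a+1, b+1) && search k m ((a+1, b+1) :: l)

def goodFrom (k : ℕ) : List (ℕ × ℕ) → List (ℕ × ℕ) → Prop
  | _, [] => True
  | l, q :: L => (1 ≤ q.1 ∧ q.1 ≤ k ∧ 1 ≤ q.2 ∧ q.2 ≤ k) ∧ compat l q = true ∧
      goodFrom k (q :: l) L

lemma search_complete {k : ℕ} :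
    ∀ L l : List (ℕ × ℕ), goodFrom k l L → search k L.length l = true := by
  intro L
  induction L with
  | nil => intro l _; rfl
  | cons q L ih =>
      intro l h
      obtain ⟨⟨h1, h2, h3, h4⟩, hc, hg⟩ := h
      show search k (L.length + 1) l = true
      rw [search, List.any_eq_true]
      refine ⟨q.1 - 1, List.mem_range.2 (by omega), ?_⟩
      rw [List.any_eq_true]
      refine ⟨q.2 - 1, List.mem_range.2 (by omega), ?_⟩
      have hq : (q.1 - 1 + 1, q.2 - 1 + 1) = q := by
        obtain ⟨x, y⟩ := q
        simp at h1 h3 ⊢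
        omega
      rw [hq, hc, ih _ hg]
      rfl

lemma okp_of {d : ℕ} {p q : ℕ × ℕ}
    (h1 : p.1 = q.1 → p.1 < d) (h2 : p.1 = q.2 → p.1 < d + 1)
    (h3 : p.2 = q.1 → p.2 < d + 1) (h4 : p.2 = q.2 → p.2 < d + 2) : okp d p q = true := by
  unfold okp
  simp only [Bool.or_eq_true, Bool.and_eq_true, bne_iff_ne, ne_eq, decide_eq_true_eq,
    beq_iff_eq]
  omega

lemma okp_zero {d : ℕ} {q : ℕ × ℕ} : okp d (0, 0) q = true := rfl

def ecol {n : ℕ} (c : Fin n ⊕ Fin n × Fin 1 → ℕ) (t : ℕ) : ℕ × ℕ :=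
  if h : t < n then (c (Sum.inl ⟨t, h⟩), c (Sum.inr (⟨t, h⟩, 0))) else (0, 0)

lemma D_ll {n : ℕ} {i m : Fin n} (h : i.val ≠ m.val) :
    D (Sum.inl i : Fin n ⊕ Fin n × Fin 1) (Sum.inl m) = Nat.dist i.val m.val := by
  simp only [D, idx, pen]
  rw [if_neg] <;> omega

lemma D_lr {n : ℕ} {i m : Fin n} {j : Fin 1} :
    D (Sum.inl i : Fin n ⊕ Fin n × Fin 1) (Sum.inr (m, j)) = Nat.dist i.val m.val + 1 := by
  unfold D; rw [if_neg (by simp [idx, pen])]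
  simp [idx, pen]

lemma D_rl {n : ℕ} {i m : Fin n} {j : Fin 1} :
    D (Sum.inr (i, j) : Fin n ⊕ Fin n × Fin 1) (Sum.inl m) = Nat.dist i.val m.val + 1 := by
  unfold D; rw [if_neg (by simp [idx, pen])]
  simp [idx, pen]

lemma D_rr {n : ℕ} {i m : Fin n} {j j' : Fin 1} (h : i.val ≠ m.val) :
    D (Sum.inr (i, j) : Fin n ⊕ Fin n × Fin 1) (Sum.inr (m, j')) = Nat.dist i.val m.val + 2 := by
  simp only [D, idx, pen]
  rw [if_neg] <;> omega

lemma block_ok {n : ℕ} {c : Fin n ⊕ Fin n × Fin 1 → ℕ}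
    (hp : ∀ u v, u ≠ v → c u = c v → c u < D u v)
    {s t : ℕ} (hs : s < n) (ht : t < n) (hst : s < t) :
    okp (t - s) (ecol c s) (ecol c t) = true := by
  rw [ecol, ecol, dif_pos hs, dif_pos ht]
  have hd : Nat.dist s t = t - s := by simp [Nat.dist]; omega
  apply okp_of <;> dsimp only <;> intro h
  · have := hp _ _ (fun hh => by simp [Fin.ext_iff] at hh; omega) h
    rwa [D_ll (by dsimp; omega), hd] at this
  · have := hp (Sum.inl ⟨s, hs⟩) (Sum.inr (⟨t, ht⟩, 0)) (by simp) h
    rwa [D_lr, hd] at this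
  · have := hp (Sum.inr (⟨s, hs⟩, 0)) (Sum.inl ⟨t, ht⟩) (by simp) h
    rwa [D_rl, hd] at this
  · have := hp (Sum.inr (⟨s, hs⟩, 0)) (Sum.inr (⟨t, ht⟩, 0))
      (fun hh => by simp [Prod.ext_iff, Fin.ext_iff] at hh; omega) h
    rwa [D_rr (by dsimp; omega), hd] at this

lemma no_col {n k m : ℕ} (hm : m ≤ n) (hs : search k m [] = false) :
    ¬ ∃ c, IsPackingColoring (genCorona (pathGraph n) 1) k c := by
  rintro ⟨c, hc⟩
  rw [packing_iff] at hc
  obtain ⟨hb, hp⟩ := hc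
  have key : ∀ (j t : ℕ) (l : List (ℕ × ℕ)), t + j ≤ m →
      (∀ i, l.getD i (0,0) = if i + 1 ≤ t then ecol c (t - 1 - i) else (0,0)) →
      goodFrom k l ((List.range' t j).map (ecol c)) := by
    intro j
    induction j with
    | zero =>
        intro t l _ _
        rw [List.range'_zero, List.map_nil]
        exact trivial
    | succ j ih =>
        intro t l htj hl
        have ht : t < n := by omega
        rw [List.range'_succ, List.map_cons]
        refine ⟨?_, ?_, ?_⟩
        · have h1 := hb (Sum.inl ⟨t, ht⟩)
          have h2 := hb (Sum.inr (⟨t, ht⟩, 0))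
          rw [ecol, dif_pos ht]
          exact ⟨h1.1, h1.2, h2.1, h2.2⟩
        · have hintra : ((ecol c t).1 != (ecol c t).2) = true := by
            rw [ecol, dif_pos ht]
            simp only [bne_iff_ne, ne_eq]
            intro hh
            have h0 := hp (Sum.inl ⟨t, ht⟩) (Sum.inr (⟨t, ht⟩, 0)) (by simp) hh
            rw [D_lr] at h0
            have h1 := (hb (Sum.inl ⟨t, ht⟩)).1
            simp [Nat.dist] at h0
            omega
          have hok : ∀ d, 1 ≤ d → okp d (l.getD (d-1) (0,0)) (ecol c t) = true := by
            intro d hd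
            rw [hl]
            split_ifs with hlt
            · have e1 : t - 1 - (d - 1) = t - d := by omega
              rw [e1]
              have := block_ok hp (show t - d < n by omega) ht (show t - d < t by omega)
              rwa [show t - (t - d) = d from by omega] at this
            · exact okp_zero
          unfold compat
          simp only [Bool.and_eq_true]
          exact ⟨⟨⟨⟨hintra, hok 1 (by omega)⟩, hok 2 (by omega)⟩, hok 3 (by omega)⟩,
            hok 4 (by omega)⟩
        · apply ih (t+1) _ (by omega)
          intro i
          cases i with
          | zero =>
              rw [List.getD_cons_zero, if_pos (by omega)]
              congr 1
          | succ i =>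
              have e : t + 1 - 1 - (i+1) = t - 1 - i := by omega
              rw [List.getD_cons_succ, hl i, e]
              by_cases hcase : i + 1 ≤ t
              · rw [if_pos hcase, if_pos (by omega)]
              · rw [if_neg hcase, if_neg (by omega)]
  have hfin := search_complete _ [] (key m 0 [] (by omega)
    (fun i => by rw [List.getD_nil, if_neg (by omega)]))
  rw [List.length_map, List.length_range'] at hfin
  rw [hs] at hfin
  exact Bool.false_ne_true hfin

def colFromList {n : ℕ} (L : List (ℕ × ℕ)) : Fin n ⊕ Fin n × Fin 1 → ℕ
  | .inl i => (L.getD i.val (0,0)).1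
  | .inr (i, _) => (L.getD i.val (0,0)).2

def tbl : List (ℕ × ℕ) := [(1,2),(3,1),(1,2),(4,1),(1,2),(3,1),(1,2),(5,1)]

def T1 (s : ℕ) : ℕ := (tbl.getD (s % 8) (0,0)).1
def T2 (s : ℕ) : ℕ := (tbl.getD (s % 8) (0,0)).2

def pcol {n : ℕ} : Fin n ⊕ Fin n × Fin 1 → ℕ
  | .inl i => T1 i.val
  | .inr (i, _) => T2 i.val

lemma tbl_bounds : ∀ r : Fin 8, (1 ≤ (tbl.getD r.val (0,0)).1 ∧ (tbl.getD r.val (0,0)).1 ≤ 5) ∧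
    (1 ≤ (tbl.getD r.val (0,0)).2 ∧ (tbl.getD r.val (0,0)).2 ≤ 5) := by decide

lemma pat_ok : ∀ r : Fin 8, ∀ d : Fin 6,
    (d.val = 0 → (tbl.getD r.val (0,0)).1 ≠ (tbl.getD r.val (0,0)).2) ∧
    (1 ≤ d.val →
      ((tbl.getD r.val (0,0)).1 = (tbl.getD ((r.val + d.val) % 8) (0,0)).1 →
        (tbl.getD r.val (0,0)).1 < d.val) ∧
      ((tbl.getD r.val (0,0)).1 = (tbl.getD ((r.val + d.val) % 8) (0,0)).2 →
        (tbl.getD r.val (0,0)).1 < d.val + 1) ∧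
      ((tbl.getD r.val (0,0)).2 = (tbl.getD ((r.val + d.val) % 8) (0,0)).1 →
        (tbl.getD r.val (0,0)).2 < d.val + 1) ∧
      ((tbl.getD r.val (0,0)).2 = (tbl.getD ((r.val + d.val) % 8) (0,0)).2 →
        (tbl.getD r.val (0,0)).2 < d.val + 2)) := by decide

lemma num (s d : ℕ) (hd : d < 6) :
    (d = 0 → T1 s ≠ T2 s) ∧
    (1 ≤ d → (T1 s = T1 (s+d) → T1 s < d) ∧ (T1 s = T2 (s+d) → T1 s < d + 1) ∧
      (T2 s = T1 (s+d) → T2 s < d + 1) ∧ (T2 s = T2 (s+d) → T2 s < d + 2)) := by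
  have h8 : s % 8 < 8 := by omega
  have e1 : (s + d) % 8 = (s % 8 + d) % 8 := by omega
  unfold T1 T2
  rw [e1]
  exact pat_ok ⟨s % 8, h8⟩ ⟨d, hd⟩

lemma pcol_bounds {n : ℕ} : ∀ v : Fin n ⊕ Fin n × Fin 1, 1 ≤ pcol v ∧ pcol v ≤ 5 := by
  intro v
  rcases v with i | ⟨i, j⟩
  · exact (tbl_bounds ⟨i.val % 8, Nat.mod_lt _ (by omega)⟩).1
  · exact (tbl_bounds ⟨i.val % 8, Nat.mod_lt _ (by omega)⟩).2

lemma pcol_main {n : ℕ} :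
    ∀ u v : Fin n ⊕ Fin n × Fin 1, u ≠ v → pcol u = pcol v → pcol u < D u v := by
  have key : ∀ u v : Fin n ⊕ Fin n × Fin 1, idx u ≤ idx v → u ≠ v → pcol u = pcol v →
      pcol u < D u v := by
    intro u v hle hne heq
    by_cases hbig : 6 ≤ idx v - idx u
    · have h5 : pcol u ≤ 5 := (pcol_bounds u).2
      have hD : 6 ≤ D u v := by
        unfold D
        rw [if_neg (by omega)]
        have : 6 ≤ Nat.dist (idx u) (idx v) := by simp [Nat.dist]; omega
        omega
      omega
    · rcases u with i | ⟨i, ji⟩ <;> rcases v with m | ⟨m, jm⟩ <;>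
          simp only [idx] at hle hbig <;>
          simp only [pcol] at heq ⊢
      · -- inl inl
        have hne' : i.val ≠ m.val := fun hh => hne (by rw [eq_iff]; simp [idx, pen, hh])
        have hm : (m : ℕ) = ↑i + (↑m - ↑i) := by omega
        rw [hm] at heq
        have := ((num ↑i (↑m - ↑i) (by omega)).2 (by omega)).1 heq
        rw [D_ll hne']
        have hdist : Nat.dist i.val m.val = ↑m - ↑i := by simp [Nat.dist]; omega
        omega
      · -- inl inr
        rw [D_lr]
        rcases Nat.eq_zero_or_pos ((m : ℕ) - ↑i) with hd0 | hd1
        · have hm : (m : ℕ) = ↑i := by omega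
          rw [hm] at heq
          exact absurd heq ((num ↑i 0 (by omega)).1 rfl)
        · have hm : (m : ℕ) = ↑i + (↑m - ↑i) := by omega
          rw [hm] at heq
          have := ((num ↑i (↑m - ↑i) (by omega)).2 hd1).2.1 heq
          have hdist : Nat.dist i.val m.val = ↑m - ↑i := by simp [Nat.dist]; omega
          omega
      · -- inr inl
        rw [D_rl]
        rcases Nat.eq_zero_or_pos ((m : ℕ) - ↑i) with hd0 | hd1
        · have hm : (m : ℕ) = ↑i := by omega
          rw [hm] at heq
          exact absurd heq.symm ((num ↑i 0 (by omega)).1 rfl)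
        · have hm : (m : ℕ) = ↑i + (↑m - ↑i) := by omega
          rw [hm] at heq
          have := ((num ↑i (↑m - ↑i) (by omega)).2 hd1).2.2.1 heq
          have hdist : Nat.dist i.val m.val = ↑m - ↑i := by simp [Nat.dist]; omega
          omega
      · -- inr inr
        have hne' : i.val ≠ m.val := fun hh => hne (by rw [eq_iff]; simp [idx, pen, hh])
        have hm : (m : ℕ) = ↑i + (↑m - ↑i) := by omega
        rw [hm] at heq
        have := ((num ↑i (↑m - ↑i) (by omega)).2 (by omega)).2.2.2 heq
        rw [D_rr hne']
        have hdist : Nat.dist i.val m.val = ↑m - ↑i := by simp [Nat.dist]; omega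
        omega
  intro u v hne heq
  rcases le_total (idx u) (idx v) with hle | hle
  · exact key u v hle hne heq
  · have := key v u hle (Ne.symm hne) heq.symm
    rw [D_comm]
    omega

lemma mono {V : Type*} {G : SimpleGraph V} {k k' : ℕ} {c : V → ℕ}
    (h : IsPackingColoring G k c) (hk : k ≤ k') : IsPackingColoring G k' c :=
  ⟨fun v => ⟨(h.1 v).1, le_trans (h.1 v).2 hk⟩, h.2⟩

lemma pcn_eq {n m : ℕ} (hex : ∃ c, IsPackingColoring (genCorona (pathGraph n) 1) m c)
    (hlow : ¬ ∃ c, IsPackingColoring (genCorona (pathGraph n) 1) (m - 1) c) :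
    packingChromaticNumber (genCorona (pathGraph n) 1) = m := by
  apply le_antisymm
  · exact Nat.sInf_le hex
  · apply le_csInf ⟨m, hex⟩
    intro k hk
    by_contra hlt
    push_neg at hlt
    obtain ⟨c, hc⟩ := hk
    exact hlow ⟨c, mono hc (by omega)⟩

end CPX

theorem packing_chromatic_corona_path (n : ℕ) :
    (n = 1 → packingChromaticNumber (genCorona (pathGraph n) 1) = 2) ∧
    ((n = 2 ∨ n = 3) → packingChromaticNumber (genCorona (pathGraph n) 1) = 3) ∧
    ((4 ≤ n ∧ n ≤ 9) → packingChromaticNumber (genCorona (pathGraph n) 1) = 4) ∧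
    (10 ≤ n → packingChromaticNumber (genCorona (pathGraph n) 1) = 5) := by
  refine ⟨?_, ?_, ?_, ?_⟩
  · rintro rfl
    exact CPX.pcn_eq ⟨CPX.colFromList [(1,2)], CPX.packing_iff.mpr (by decide)⟩
      (CPX.no_col (le_refl 1) (by decide))
  · rintro (rfl | rfl)
    · exact CPX.pcn_eq ⟨CPX.colFromList [(1,2),(3,1)], CPX.packing_iff.mpr (by decide)⟩
        (CPX.no_col (m := 2) (by omega) (by decide))
    · exact CPX.pcn_eq ⟨CPX.colFromList [(1,2),(3,1),(1,2)], CPX.packing_iff.mpr (by decide)⟩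
        (CPX.no_col (m := 2) (by omega) (by decide))
  · rintro ⟨h4, h9⟩
    interval_cases n
    · exact CPX.pcn_eq
        ⟨CPX.colFromList [(1,2),(3,1),(1,2),(4,1)], CPX.packing_iff.mpr (by decide)⟩
        (CPX.no_col (m := 4) (by omega) (by decide))
    · exact CPX.pcn_eq
        ⟨CPX.colFromList [(1,2),(3,1),(1,2),(4,1),(1,2)], CPX.packing_iff.mpr (by decide)⟩
        (CPX.no_col (m := 4) (by omega) (by decide))
    · exact CPX.pcn_eq
        ⟨CPX.colFromList [(1,2),(3,1),(1,2),(4,1),(1,2),(3,1)], CPX.packing_iff.mpr (by decide)⟩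
        (CPX.no_col (m := 4) (by omega) (by decide))
    · exact CPX.pcn_eq
        ⟨CPX.colFromList [(1,2),(3,1),(1,2),(4,1),(1,2),(3,1),(1,2)],
          CPX.packing_iff.mpr (by decide)⟩
        (CPX.no_col (m := 4) (by omega) (by decide))
    · exact CPX.pcn_eq
        ⟨CPX.colFromList [(1,2),(3,1),(1,2),(4,1),(1,2),(3,1),(2,1),(1,4)],
          CPX.packing_iff.mpr (by decide)⟩
        (CPX.no_col (m := 4) (by omega) (by decide))
    · exact CPX.pcn_eq
        ⟨CPX.colFromList [(1,4),(2,1),(3,1),(1,2),(4,1),(1,2),(3,1),(2,1),(1,4)],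
          CPX.packing_iff.mpr (by decide)⟩
        (CPX.no_col (m := 4) (by omega) (by decide))
  · intro h10
    exact CPX.pcn_eq ⟨CPX.pcol, CPX.packing_iff.mpr ⟨CPX.pcol_bounds, CPX.pcol_main⟩⟩
      (CPX.no_col (m := 10) h10 (by decide))
end

section
/- Let P_n = x_1…x_n be a path with n ≥ 2 and let p ≥ 1. Any packing coloring π of the generalized corona P_n ⊙ pK_1 with π(x_i) = 1 must use at least p+3 colors if 2 ≤ i ≤ n−1, and at least p+2 colors if i ∈ {1, n}. -/
open SimpleGraph

lemma star_bound {V : Type*} (G : SimpleGraph V) (k : ℕ) (c : V → ℕ)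
    (hc : IsPackingColoring G k c) (x : V) (hx : c x = 1)
    (m : ℕ) (v : Fin m → V) (hinj : Function.Injective v)
    (hadj : ∀ j, G.Adj x (v j)) : m + 1 ≤ k := by
  have hk1 : 1 ≤ k := hx ▸ (hc.1 x).2
  have hcol : ∀ j, 2 ≤ c (v j) ∧ c (v j) ≤ k := by
    intro j
    refine ⟨?_, (hc.1 (v j)).2⟩
    rcases Nat.lt_or_ge (c (v j)) 2 with h | h
    · exfalso
      have h1 : c (v j) = 1 := le_antisymm (by omega) (hc.1 (v j)).1
      have hne : x ≠ v j := (hadj j).ne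
      have hlt := hc.2 x (v j) hne (by rw [hx, h1])
      have hle : G.edist x (v j) ≤ 1 := by
        have := SimpleGraph.edist_le ((hadj j).toWalk)
        simpa using this
      rw [hx] at hlt
      have : (1 : ℕ∞) < 1 := lt_of_lt_of_le (by exact_mod_cast hlt) hle
      simp at this
    · exact h
  have hcinj : Function.Injective (fun j => c (v j)) := by
    intro a b hab
    by_contra hne
    have hvne : v a ≠ v b := fun h => hne (hinj h)
    have hlt := hc.2 (v a) (v b) hvne hab
    have hle : G.edist (v a) (v b) ≤ 2 := by
      have := SimpleGraph.edist_le (((hadj a).symm.toWalk).append ((hadj b).toWalk))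
      simpa using this
    have h2 : (2 : ℕ∞) ≤ (c (v a) : ℕ∞) := by exact_mod_cast (hcol a).1
    have : (2 : ℕ∞) < 2 := lt_of_le_of_lt h2 (lt_of_lt_of_le hlt hle)
    simp at this
  have hsub : Finset.univ.image (fun j : Fin m => c (v j)) ⊆ Finset.Icc 2 k := by
    intro y hy
    simp only [Finset.mem_image, Finset.mem_univ, true_and] at hy
    obtain ⟨j, rfl⟩ := hy
    exact Finset.mem_Icc.mpr (hcol j)
  have hcard := Finset.card_le_card hsub
  rw [Finset.card_image_of_injective _ hcinj, Finset.card_univ, Fintype.card_fin,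
    Nat.card_Icc] at hcard
  omega


lemma corona_star_endpoint (n p k : ℕ) (c : Fin n ⊕ Fin n × Fin p → ℕ)
    (hc : IsPackingColoring (genCorona (pathGraph n) p) k c)
    (i : Fin n) (hci : c (Sum.inl i) = 1) (t : Fin n)
    (ht : (pathGraph n).Adj i t) : p + 2 ≤ k := by
  set v : Fin (p + 1) → Fin n ⊕ Fin n × Fin p := fun j =>
    if h : (j : ℕ) < p then Sum.inr (i, ⟨j, h⟩) else Sum.inl t with hv
  have hadj : ∀ j, (genCorona (pathGraph n) p).Adj (Sum.inl i) (v j) := by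
    intro j
    rw [hv]
    dsimp only
    split_ifs with h
    · exact Or.inr (Or.inl ⟨i, ⟨j, h⟩, rfl, rfl⟩)
    · exact Or.inl ⟨i, t, rfl, rfl, ht⟩
  have hinj : Function.Injective v := by
    intro a b hab
    rw [hv] at hab
    dsimp only at hab
    by_cases ha : (a : ℕ) < p <;> by_cases hb : (b : ℕ) < p
    · rw [dif_pos ha, dif_pos hb] at hab
      simp only [Sum.inr.injEq, Prod.mk.injEq, Fin.mk.injEq, true_and] at hab
      exact Fin.ext hab
    · rw [dif_pos ha, dif_neg hb] at hab; exact absurd hab (by simp)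
    · rw [dif_neg ha, dif_pos hb] at hab; exact absurd hab (by simp)
    · have := a.isLt; have := b.isLt
      exact Fin.ext (by omega)
  have := star_bound _ k c hc (Sum.inl i) hci (p + 1) v hinj hadj
  omega

theorem packing_coloring_corona_path_color_one (n p k : ℕ) (hn : 2 ≤ n) (hp : 1 ≤ p)
    (c : Fin n ⊕ Fin n × Fin p → ℕ)
    (hc : IsPackingColoring (genCorona (pathGraph n) p) k c)
    (i : Fin n) (hci : c (Sum.inl i) = 1) :
    ((i.val ≠ 0 ∧ i.val ≠ n - 1) → p + 3 ≤ k) ∧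
    ((i.val = 0 ∨ i.val = n - 1) → p + 2 ≤ k) := by
  have hi := i.isLt
  constructor
  · rintro ⟨h0, h1⟩
    have h1' : i.val + 1 < n := by omega
    have h0' : 1 ≤ i.val := by omega
    set v : Fin (p + 2) → Fin n ⊕ Fin n × Fin p := fun j =>
      if h : (j : ℕ) < p then Sum.inr (i, ⟨j, h⟩)
      else if (j : ℕ) = p then Sum.inl ⟨i.val - 1, by omega⟩
      else Sum.inl ⟨i.val + 1, h1'⟩ with hv
    have hadj : ∀ j, (genCorona (pathGraph n) p).Adj (Sum.inl i) (v j) := by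
      intro j
      rw [hv]
      dsimp only
      split_ifs with h h'
      · exact Or.inr (Or.inl ⟨i, ⟨j, h⟩, rfl, rfl⟩)
      · refine Or.inl ⟨i, ⟨i.val - 1, by omega⟩, rfl, rfl, ?_⟩
        rw [pathGraph_adj]
        right; simp; omega
      · refine Or.inl ⟨i, ⟨i.val + 1, h1'⟩, rfl, rfl, ?_⟩
        rw [pathGraph_adj]
        left; simp
    have hinj : Function.Injective v := by
      intro a b hab
      rw [hv] at hab
      dsimp only at hab
      split_ifs at hab with ha ha' hb hb hb'
      · simp only [Sum.inr.injEq, Prod.mk.injEq, Fin.mk.injEq, true_and] at hab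
        exact Fin.ext hab
      all_goals simp_all
      all_goals omega
    have := star_bound _ k c hc (Sum.inl i) hci (p + 2) v hinj hadj
    omega
  · intro hi0
    rcases hi0 with h0 | h1
    · exact corona_star_endpoint n p k c hc i hci ⟨1, by omega⟩
        (by rw [pathGraph_adj]; left; simp [h0])
    · have h1' : 1 ≤ i.val := by omega
      exact corona_star_endpoint n p k c hc i hci ⟨i.val - 1, by omega⟩
        (by rw [pathGraph_adj]; right; simp; omega)
end

section
/- For every orientation C⃗_n of the cycle C_n (n ≥ 3), 2 ≤ χρ(C⃗_n) ≤ 4, and χρ(C⃗_n) = 4 if and only if C⃗_n is a directed cycle (all arcs in the same direction), n ≥ 5, and n ≢ 0 (mod 4). -/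
open SimpleGraph

namespace DPackAux

open Fin.CommRing

variable {n : ℕ}

theorem adj_iff [NeZero n] (hn : 3 ≤ n) {u w : Fin n} :
    (cycleGraph n).Adj u w ↔ w = u + 1 ∨ w = u - 1 := by
  have h1 : ((1 : Fin n)).val = 1 := by
    rw [Fin.val_one']; exact Nat.mod_eq_of_lt (by omega)
  rw [cycleGraph_adj']
  constructor
  · rintro (h | h)
    · right
      have h2 : u - w = 1 := Fin.ext (by rw [h1]; exact h)
      rw [← h2]; ring
    · left
      have h2 : w - u = 1 := Fin.ext (by rw [h1]; exact h)
      rw [← h2]; ring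
  · rintro (h | h)
    · right; rw [h, add_sub_cancel_left, h1]
    · left; rw [h, sub_sub_cancel, h1]

theorem adj_succ [NeZero n] (hn : 3 ≤ n) (i : Fin n) : (cycleGraph n).Adj i (i + 1) :=
  (adj_iff hn).2 (Or.inl rfl)

variable {A : Fin n → Fin n → Prop}

theorem arc_cases [NeZero n] (hn : 3 ≤ n) (hA : IsOrientation (cycleGraph n) A)
    {u w : Fin n} (h : A u w) : w = u + 1 ∨ w = u - 1 :=
  (adj_iff hn).1 ((hA.2 u w).2 (Or.inl h))

theorem arc_total [NeZero n] (hn : 3 ≤ n) (hA : IsOrientation (cycleGraph n) A) (i : Fin n) :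
    A i (i + 1) ∨ A (i + 1) i := (hA.2 i (i + 1)).1 (adj_succ hn i)

theorem walk_mono [NeZero n] (hn : 3 ≤ n) (hA : IsOrientation (cycleGraph n) A) :
    ∀ m (u v : Fin n), DPath A (m + 1) u v →
      (v = u + ((m + 1 : ℕ) : Fin n) ∧ ∀ j ≤ m, A (u + (j : Fin n)) (u + (j : Fin n) + 1)) ∨
      (v = u - ((m + 1 : ℕ) : Fin n) ∧ ∀ j ≤ m, A (u - (j : Fin n)) (u - (j : Fin n) - 1)) := by
  intro m
  induction m with
  | zero =>
    rintro u v ⟨w, haw, hwv⟩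
    simp only [DPath] at hwv
    subst hwv
    rcases arc_cases hn hA haw with h | h <;> subst h
    · left
      refine ⟨by push_cast; ring, ?_⟩
      intro j hj
      interval_cases j
      simpa using haw
    · right
      refine ⟨by push_cast; ring, ?_⟩
      intro j hj
      interval_cases j
      simpa using haw
  | succ m ih =>
    rintro u v ⟨w, haw, hwv⟩
    rcases ih w v hwv with ⟨hv, harcs⟩ | ⟨hv, harcs⟩ <;>
      rcases arc_cases hn hA haw with h | h <;> subst h
    · -- forward then forward
      left
      constructor
      · rw [hv]; push_cast; ring
      · intro j hj
        rcases Nat.eq_zero_or_pos j with rfl | hj0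
        · simpa using haw
        · have h2 := harcs (j - 1) (by omega)
          have hj1 : ((j : ℕ) : Fin n) = ((j - 1 : ℕ) : Fin n) + 1 := by
            conv_lhs => rw [show j = (j - 1) + 1 from by omega]
            push_cast; ring
          have e1 : u + 1 + ((j - 1 : ℕ) : Fin n) = u + (j : Fin n) := by
            rw [hj1]; ring
          rw [← e1]
          exact h2
    · -- backward step then forward run : contradiction
      exfalso
      have h0 := harcs 0 (Nat.zero_le m)
      simp only [Nat.cast_zero, add_zero, sub_add_cancel] at h0
      exact hA.1 u (u - 1) haw h0
    · -- forward step then backward run : contradiction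
      exfalso
      have h0 := harcs 0 (Nat.zero_le m)
      simp only [Nat.cast_zero, sub_zero, add_sub_cancel_right] at h0
      exact hA.1 u (u + 1) haw h0
    · -- backward then backward
      right
      constructor
      · rw [hv]; push_cast; ring
      · intro j hj
        rcases Nat.eq_zero_or_pos j with rfl | hj0
        · simpa using haw
        · have h2 := harcs (j - 1) (by omega)
          have hj1 : ((j : ℕ) : Fin n) = ((j - 1 : ℕ) : Fin n) + 1 := by
            conv_lhs => rw [show j = (j - 1) + 1 from by omega]
            push_cast; ring
          have e1 : u - 1 - ((j - 1 : ℕ) : Fin n) = u - (j : Fin n) := by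
            rw [hj1]; ring
          rw [← e1]
          exact h2

theorem val_add_cast [NeZero n] (x : Fin n) (m : ℕ) :
    (x + (m : Fin n)).val = (x.val + m) % n := by
  rw [Fin.add_def]
  simp only [Fin.val_natCast]
  rw [Nat.add_mod_mod]

theorem val_sub_cast [NeZero n] (x : Fin n) (m : ℕ) (hm : m < n) :
    (x - (m : Fin n)).val = (x.val + (n - m)) % n := by
  rw [Fin.sub_def]
  simp only [Fin.val_natCast]
  rw [Nat.mod_eq_of_lt hm]
  congr 1
  omega

theorem val_sub_eq (u v : Fin n) :
    (v - u).val = if u.val ≤ v.val then v.val - u.val else v.val + n - u.val := by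
  have hu := u.isLt
  have hv := v.isLt
  rw [Fin.sub_def]
  simp only []
  split_ifs with h
  · rw [show n - u.val + v.val = n + (v.val - u.val) from by omega, Nat.add_mod_left,
      Nat.mod_eq_of_lt (by omega)]
  · rw [Nat.mod_eq_of_lt (by omega)]
    omega

theorem wdist_gt {K : ℕ} {u v : Fin n} (huv : u ≠ v)
    (key : ∀ m, 1 ≤ m → m ≤ K → ¬ (DPath A m u v ∨ DPath A m v u)) :
    (K : ℕ∞) < wdist A u v := by
  have hle : ∀ b ∈ {m : ℕ∞ | ∃ k : ℕ, m = k ∧ (DPath A k u v ∨ DPath A k v u)},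
      ((K + 1 : ℕ) : ℕ∞) ≤ b := by
    rintro b ⟨k, rfl, hk⟩
    rcases Nat.lt_or_ge k (K + 1) with h | h
    · exfalso
      rcases Nat.eq_zero_or_pos k with rfl | h1
      · simp only [DPath] at hk
        rcases hk with h | h
        · exact huv h
        · exact huv h.symm
      · exact key k h1 (by omega) hk
    · exact_mod_cast h
  calc (K : ℕ∞) < ((K + 1 : ℕ) : ℕ∞) := by exact_mod_cast Nat.lt_succ_self K
    _ ≤ wdist A u v := le_sInf hle

theorem wdist_le {m : ℕ} {u v : Fin n} (h : DPath A m u v ∨ DPath A m v u) :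
    wdist A u v ≤ (m : ℕ∞) := sInf_le ⟨m, rfl, h⟩

theorem dpath_fwd [NeZero n] (hdir : ∀ i : Fin n, A i (i + 1)) :
    ∀ m (u : Fin n), DPath A m u (u + (m : Fin n)) := by
  intro m
  induction m with
  | zero => intro u; simp only [Nat.cast_zero, add_zero, DPath]
  | succ m ih =>
    intro u
    refine ⟨u + 1, hdir u, ?_⟩
    have := ih (u + 1)
    have e : u + 1 + (m : Fin n) = u + ((m + 1 : ℕ) : Fin n) := by push_cast; ring
    rwa [e] at this

theorem dpath_bwd [NeZero n] (hdir : ∀ i : Fin n, A (i + 1) i) :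
    ∀ m (u : Fin n), DPath A m u (u - (m : Fin n)) := by
  intro m
  induction m with
  | zero => intro u; simp only [Nat.cast_zero, sub_zero, DPath]
  | succ m ih =>
    intro u
    have harc : A u (u - 1) := by
      have := hdir (u - 1)
      rwa [sub_add_cancel] at this
    refine ⟨u - 1, harc, ?_⟩
    have := ih (u - 1)
    have e : u - 1 - (m : Fin n) = u - ((m + 1 : ℕ) : Fin n) := by push_cast; ring
    rwa [e] at this

theorem valid_of_cyc [NeZero n] (hn : 3 ≤ n) (hA : IsOrientation (cycleGraph n) A)
    {k : ℕ} {c : Fin n → ℕ} (hb : ∀ v, 1 ≤ c v ∧ c v ≤ k)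
    (hc : ∀ u v : Fin n, u ≠ v → c u = c v → c u < (v - u).val) :
    IsDPackingColoring A k c := by
  refine ⟨hb, fun u v huv hcc => ?_⟩
  refine wdist_gt huv fun m h1 hm hp => ?_
  obtain ⟨m, rfl⟩ : ∃ m', m = m' + 1 := ⟨m - 1, by omega⟩
  rcases hp with hp | hp
  · rcases walk_mono hn hA m u v hp with ⟨hv, -⟩ | ⟨hv, -⟩
    · have h2 : (v - u).val = (m + 1) % n := by rw [hv, add_sub_cancel_left, Fin.val_natCast]
      have := hc u v huv hcc
      have := Nat.mod_le (m + 1) n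
      omega
    · have h2 : (u - v).val = (m + 1) % n := by rw [hv, sub_sub_cancel, Fin.val_natCast]
      have := hc v u (Ne.symm huv) hcc.symm
      have := Nat.mod_le (m + 1) n
      omega
  · rcases walk_mono hn hA m v u hp with ⟨hv, -⟩ | ⟨hv, -⟩
    · have h2 : (u - v).val = (m + 1) % n := by rw [hv, add_sub_cancel_left, Fin.val_natCast]
      have := hc v u (Ne.symm huv) hcc.symm
      have := Nat.mod_le (m + 1) n
      omega
    · have h2 : (v - u).val = (m + 1) % n := by rw [hv, sub_sub_cancel, Fin.val_natCast]
      have := hc u v huv hcc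
      have := Nat.mod_le (m + 1) n
      omega

/-- The basic period-4 pattern 1,2,1,3. -/
def pat (t : ℕ) : ℕ := if t % 2 = 0 then 1 else if t % 4 = 1 then 2 else 3

/-- 4-coloring of the cycle: pattern with a single 4 at position `n-1` when `4 ∤ n`. -/
def Dfun (n t : ℕ) : ℕ := if n % 4 ≠ 0 ∧ t = n - 1 then 4 else pat t

/-- 3-coloring pattern for linear (source-cut) colorings. -/
def Cfun (n t : ℕ) : ℕ :=
  if n % 2 = 0 then pat t
  else if n % 4 = 1 then (if t = n - 1 then 2 else if t = n then 1 else pat t)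
  else if t < 3 then t + 1 else pat (t - 3)

theorem Dfun_P {n : ℕ} (a b : ℕ) (hab : a < b) (hb : b < n) (h : Dfun n a = Dfun n b) :
    Dfun n a < b - a ∧ Dfun n a < n - (b - a) := by
  unfold Dfun pat at h ⊢
  split_ifs at h ⊢ <;> omega

theorem Dfun_bounds {n : ℕ} (hn : 3 ≤ n) (t : ℕ) : 1 ≤ Dfun n t ∧ Dfun n t ≤ 4 := by
  unfold Dfun pat
  split_ifs <;> omega

theorem Dfun_bounds3 {n : ℕ} (hn : n % 4 = 0) (t : ℕ) : 1 ≤ Dfun n t ∧ Dfun n t ≤ 3 := by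
  unfold Dfun pat
  split_ifs <;> omega

theorem Cfun_P {n : ℕ} (hn : 3 ≤ n) (a b : ℕ) (hab : a < b) (hb : b ≤ n)
    (h : Cfun n a = Cfun n b) : Cfun n a < b - a := by
  unfold Cfun pat at h ⊢
  split_ifs at h ⊢ <;> omega

theorem Cfun_bounds {n : ℕ} (hn : 3 ≤ n) (t : ℕ) : 1 ≤ Cfun n t ∧ Cfun n t ≤ 3 := by
  unfold Cfun pat
  split_ifs <;> omega

theorem Cfun_wrap {n : ℕ} (hn : 3 ≤ n) : Cfun n n = Cfun n 0 := by
  unfold Cfun pat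
  split_ifs <;> omega

theorem exists_coloring4 [NeZero n] (hn : 3 ≤ n) (hA : IsOrientation (cycleGraph n) A) :
    ∃ c, IsDPackingColoring A 4 c := by
  refine ⟨fun v => Dfun n v.val, valid_of_cyc hn hA (fun v => Dfun_bounds hn v.val)
    (fun u v huv hcc => ?_)⟩
  have hu := u.isLt; have hv := v.isLt
  have hne : u.val ≠ v.val := fun h => huv (Fin.ext h)
  rw [val_sub_eq]
  rcases Nat.lt_or_ge u.val v.val with h | h
  · rw [if_pos h.le]
    exact (Dfun_P u.val v.val h hv hcc).1
  · have h' : v.val < u.val := by omega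
    rw [if_neg (by omega), hcc]
    have h2 := Dfun_P v.val u.val h' hu hcc.symm
    omega

theorem exists_coloring3_mod4 [NeZero n] (hn : 3 ≤ n) (h4 : n % 4 = 0)
    (hA : IsOrientation (cycleGraph n) A) : ∃ c, IsDPackingColoring A 3 c := by
  refine ⟨fun v => Dfun n v.val, valid_of_cyc hn hA (fun v => Dfun_bounds3 h4 v.val)
    (fun u v huv hcc => ?_)⟩
  have hu := u.isLt; have hv := v.isLt
  have hne : u.val ≠ v.val := fun h => huv (Fin.ext h)
  rw [val_sub_eq]
  rcases Nat.lt_or_ge u.val v.val with h | h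
  · rw [if_pos h.le]
    exact (Dfun_P u.val v.val h hv hcc).1
  · have h' : v.val < u.val := by omega
    rw [if_neg (by omega), hcc]
    have h2 := Dfun_P v.val u.val h' hu hcc.symm
    omega

theorem exists_coloring3_small [NeZero n] (hn : 3 ≤ n) (hn4 : n ≤ 4)
    (hA : IsOrientation (cycleGraph n) A) : ∃ c, IsDPackingColoring A 3 c := by
  rcases Nat.eq_or_lt_of_le hn with h3 | h4
  · refine ⟨fun v => v.val + 1, valid_of_cyc hn hA (fun v => ⟨by omega, by have := v.isLt; omega⟩)
      (fun u v huv hcc => ?_)⟩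
    exact absurd (Fin.ext (by omega)) huv
  · exact exists_coloring3_mod4 hn (by omega) hA

theorem exists_source [NeZero n] (hn : 3 ≤ n) (hA : IsOrientation (cycleGraph n) A)
    (h1 : ¬ ∀ i : Fin n, A i (i + 1)) (h2 : ¬ ∀ i : Fin n, A (i + 1) i) :
    ∃ s : Fin n, A s (s + 1) ∧ A s (s - 1) := by
  classical
  push_neg at h1 h2
  obtain ⟨i, hi⟩ := h1
  obtain ⟨j, hj⟩ := h2
  have hf : A j (j + 1) := (arc_total hn hA j).resolve_right hj
  have hex : ∃ t : ℕ, A (i + (t : Fin n)) (i + (t : Fin n) + 1) := by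
    refine ⟨(j - i).val, ?_⟩
    rw [Fin.cast_val_eq_self, add_sub_cancel]
    exact hf
  let t0 := Nat.find hex
  have ht0 : A (i + (t0 : Fin n)) (i + (t0 : Fin n) + 1) := Nat.find_spec hex
  have ht0pos : 1 ≤ t0 := by
    rcases Nat.eq_zero_or_pos t0 with h | h
    · exfalso
      have h' := ht0
      rw [h] at h'
      simp only [Nat.cast_zero, add_zero] at h'
      exact hi h'
    · exact h
  have hprev : ¬ A (i + ((t0 - 1 : ℕ) : Fin n)) (i + ((t0 - 1 : ℕ) : Fin n) + 1) :=
    Nat.find_min hex (by omega)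
  refine ⟨i + (t0 : Fin n), ht0, ?_⟩
  have hb : A (i + ((t0 - 1 : ℕ) : Fin n) + 1) (i + ((t0 - 1 : ℕ) : Fin n)) :=
    (arc_total hn hA _).resolve_left hprev
  have e : i + ((t0 - 1 : ℕ) : Fin n) + 1 = i + (t0 : Fin n) := by
    conv_rhs => rw [show t0 = (t0 - 1) + 1 from by omega]
    push_cast; ring
  have e2 : i + ((t0 - 1 : ℕ) : Fin n) = i + (t0 : Fin n) - 1 := by rw [← e]; ring
  rw [e, e2] at hb
  exact hb

theorem source_run [NeZero n] (hn : 3 ≤ n) (hA : IsOrientation (cycleGraph n) A) {s : Fin n}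
    (hs1 : A s (s + 1)) (hs2 : A s (s - 1)) {x y : Fin n} {m : ℕ}
    (hm1 : 1 ≤ m) (hmn : m < n) (hp : DPath A m x y) :
    ((x - s).val + m < n ∧ (y - s).val = (x - s).val + m) ∨
    ((x - s).val + m = n ∧ (y - s).val = 0) ∨
    (m ≤ (x - s).val ∧ (y - s).val = (x - s).val - m) ∨
    ((x - s).val = 0 ∧ (y - s).val = n - m) := by
  obtain ⟨m, rfl⟩ : ∃ m', m = m' + 1 := ⟨m - 1, by omega⟩
  have han : (x - s).val < n := (x - s).isLt
  rcases walk_mono hn hA m x y hp with ⟨hy, harcs⟩ | ⟨hy, harcs⟩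
  · -- forward run
    have hb : (y - s).val = ((x - s).val + (m + 1)) % n := by
      rw [hy, show x + ((m + 1 : ℕ) : Fin n) - s = (x - s) + ((m + 1 : ℕ) : Fin n) from by ring,
        val_add_cast]
    rcases Nat.lt_trichotomy ((x - s).val + (m + 1)) n with h | h | h
    · left
      rw [hb, Nat.mod_eq_of_lt h]
      exact ⟨h, rfl⟩
    · right; left
      refine ⟨h, ?_⟩
      rw [hb, h, Nat.mod_self]
    · exfalso
      set j0 := n - (x - s).val with hj0
      have hj0b : 1 ≤ j0 ∧ j0 ≤ m := by omega
      have harc := harcs (j0 - 1) (by omega)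
      have hxj : x + ((j0 : ℕ) : Fin n) = s := by
        have hvv : (x + ((j0 : ℕ) : Fin n) - s).val = 0 := by
          rw [show x + ((j0 : ℕ) : Fin n) - s = (x - s) + ((j0 : ℕ) : Fin n) from by ring,
            val_add_cast, show (x - s).val + j0 = n from by omega, Nat.mod_self]
        have h0 : x + ((j0 : ℕ) : Fin n) - s = 0 := Fin.ext (by rw [hvv, Fin.val_zero])
        exact sub_eq_zero.mp h0
      have e1 : x + ((j0 - 1 : ℕ) : Fin n) + 1 = s := by
        rw [← hxj]
        conv_rhs => rw [show j0 = (j0 - 1) + 1 from by omega]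
        push_cast; ring
      have e2 : x + ((j0 - 1 : ℕ) : Fin n) = s - 1 := by rw [← e1]; ring
      rw [e1, e2] at harc
      exact hA.1 s (s - 1) hs2 harc
  · -- backward run
    have hb : (y - s).val = ((x - s).val + (n - (m + 1))) % n := by
      rw [hy, show x - ((m + 1 : ℕ) : Fin n) - s = (x - s) - ((m + 1 : ℕ) : Fin n) from by ring,
        val_sub_cast _ _ hmn]
    rcases Nat.lt_or_ge (x - s).val (m + 1) with h | h
    · rcases Nat.eq_zero_or_pos (x - s).val with h0 | h0
      · right; right; right
        rw [hb, h0, Nat.zero_add, Nat.mod_eq_of_lt (by omega)]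
        exact ⟨rfl, rfl⟩
      · exfalso
        set j0 := (x - s).val with hj0
        have harc := harcs (j0 - 1) (by omega)
        have hxj : x - ((j0 : ℕ) : Fin n) = s := by
          have hvv : (x - ((j0 : ℕ) : Fin n) - s).val = 0 := by
            rw [show x - ((j0 : ℕ) : Fin n) - s = (x - s) - ((j0 : ℕ) : Fin n) from by ring,
              val_sub_cast _ _ (by omega), show j0 + (n - j0) = n from by omega]
            exact Nat.mod_self n
          have h0 : x - ((j0 : ℕ) : Fin n) - s = 0 := Fin.ext (by rw [hvv, Fin.val_zero])
          exact sub_eq_zero.mp h0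
        have e1 : x - ((j0 - 1 : ℕ) : Fin n) - 1 = s := by
          rw [← hxj]
          conv_rhs => rw [show j0 = (j0 - 1) + 1 from by omega]
          push_cast; ring
        have e2 : x - ((j0 - 1 : ℕ) : Fin n) = s + 1 := by rw [← e1]; ring
        rw [e2] at harc
        rw [show s + 1 - 1 = s from by ring] at harc
        exact hA.1 s (s + 1) hs1 harc
    · right; right; left
      rw [hb, show (x - s).val + (n - (m + 1)) = n + ((x - s).val - (m + 1)) from by omega,
        Nat.add_mod_left, Nat.mod_eq_of_lt (by omega)]
      exact ⟨h, rfl⟩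

theorem exists_coloring3_source [NeZero n] (hn : 5 ≤ n) (hA : IsOrientation (cycleGraph n) A)
    {s : Fin n} (hs1 : A s (s + 1)) (hs2 : A s (s - 1)) :
    ∃ c, IsDPackingColoring A 3 c := by
  have hn3 : 3 ≤ n := by omega
  refine ⟨fun v => Cfun n (v - s).val, ⟨fun v => Cfun_bounds hn3 _, fun u v huv hcc => ?_⟩⟩
  dsimp only at hcc ⊢
  have key : ∀ x y : Fin n, ∀ m, 1 ≤ m → m ≤ Cfun n ((x - s).val) →
      Cfun n ((x - s).val) = Cfun n ((y - s).val) → DPath A m x y → False := by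
    intro x y m hm1 hcol hcxy hpath
    have hax := (x - s).isLt
    have hay := (y - s).isLt
    have hb3 := Cfun_bounds hn3 (x - s).val
    have hmn : m < n := by omega
    have hw := Cfun_wrap (n := n) hn3
    rcases source_run hn3 hA hs1 hs2 hm1 hmn hpath with ⟨h, hb⟩ | ⟨h, hb⟩ | ⟨h, hb⟩ | ⟨h, hb⟩
    · rw [hb] at hcxy
      have := Cfun_P hn3 (x - s).val ((x - s).val + m) (by omega) (by omega) hcxy
      omega
    · rw [hb] at hcxy
      have := Cfun_P hn3 (x - s).val n (by omega) le_rfl (by rw [hw]; exact hcxy)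
      omega
    · rw [hb] at hcxy
      have := Cfun_P hn3 ((x - s).val - m) (x - s).val (by omega) (by omega) hcxy.symm
      omega
    · rw [hb, ] at hcxy
      rw [h] at hcol hcxy
      have := Cfun_P hn3 (n - m) n (by omega) le_rfl (hcxy.symm.trans hw.symm)
      omega
  refine wdist_gt huv fun m hm1 hmK hp => ?_
  rcases hp with hp | hp
  · exact key u v m hm1 hmK hcc hp
  · exact key v u m hm1 (hcc ▸ hmK) hcc.symm hp

theorem no_coloring3 [NeZero n] (hn : 5 ≤ n) (hn4 : n % 4 ≠ 0)
    (hA : IsOrientation (cycleGraph n) A)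
    (hdir : (∀ i : Fin n, A i (i + 1)) ∨ (∀ i : Fin n, A (i + 1) i))
    (c : Fin n → ℕ) (hc : IsDPackingColoring A 3 c) : False := by
  have hn3 : 3 ≤ n := by omega
  -- weak distance to a vertex δ steps ahead is at most δ
  have hwle : ∀ (u : Fin n) (δ : ℕ), wdist A u (u + (δ : Fin n)) ≤ (δ : ℕ∞) := by
    intro u δ
    rcases hdir with hd | hd
    · exact wdist_le (Or.inl (dpath_fwd hd δ u))
    · refine wdist_le (Or.inr ?_)
      have := dpath_bwd hd δ (u + (δ : Fin n))
      rwa [add_sub_cancel_right] at this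
  have same_lt : ∀ (u : Fin n) (δ : ℕ), 1 ≤ δ → δ < n →
      c u = c (u + (δ : Fin n)) → c u < δ := by
    intro u δ h1 h2 hcc
    have hne : u ≠ u + (δ : Fin n) := by
      intro h
      have : ((δ : Fin n)).val = 0 := by
        have h0 : u + (δ : Fin n) - u = 0 := by rw [← h]; ring
        rw [add_sub_cancel_left] at h0
        rw [h0, Fin.val_zero]
      rw [Fin.val_natCast, Nat.mod_eq_of_lt h2] at this
      omega
    have hlt := hc.2 u (u + (δ : Fin n)) hne hcc
    have := lt_of_lt_of_le hlt (hwle u δ)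
    exact_mod_cast this
  -- every window of 4 consecutive vertices contains a 3
  have window : ∀ w : Fin n, ∃ jj : ℕ, jj < 4 ∧ c (w + ((jj + 1 : ℕ) : Fin n)) = 3 := by
    intro w
    by_contra hcon
    push_neg at hcon
    have step : ∀ i j : ℕ, i < j → j ≤ 3 →
        c (w + ((i + 1 : ℕ) : Fin n)) = c (w + ((j + 1 : ℕ) : Fin n)) →
        c (w + ((i + 1 : ℕ) : Fin n)) < j - i := by
      intro i j hij hj3 hcc
      have e : w + ((j + 1 : ℕ) : Fin n) = (w + ((i + 1 : ℕ) : Fin n)) + ((j - i : ℕ) : Fin n) := by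
        conv_lhs => rw [show j + 1 = (i + 1) + (j - i) from by omega]
        push_cast; ring
      rw [e] at hcc
      exact same_lt _ (j - i) (by omega) (by omega) hcc
    have h01 := step 0 1 (by omega) (by omega)
    have h12 := step 1 2 (by omega) (by omega)
    have h23 := step 2 3 (by omega) (by omega)
    have h02 := step 0 2 (by omega) (by omega)
    have h13 := step 1 3 (by omega) (by omega)
    have hne0 := hcon 0 (by omega)
    have hne1 := hcon 1 (by omega)
    have hne2 := hcon 2 (by omega)
    have hne3 := hcon 3 (by omega)
    have hb0 := hc.1 (w + ((0 + 1 : ℕ) : Fin n))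
    have hb1 := hc.1 (w + ((1 + 1 : ℕ) : Fin n))
    have hb2 := hc.1 (w + ((2 + 1 : ℕ) : Fin n))
    have hb3 := hc.1 (w + ((3 + 1 : ℕ) : Fin n))
    omega
  -- a vertex of color 3 propagates 4 steps ahead
  have step4 : ∀ x : Fin n, c x = 3 → c (x + ((4 : ℕ) : Fin n)) = 3 := by
    intro x hx
    obtain ⟨jj, hjj, h3⟩ := window x
    rcases Nat.lt_or_ge jj 3 with h | h
    · exfalso
      have := same_lt x (jj + 1) (by omega) (by omega) (by rw [hx, h3])
      omega
    · have hjj3 : jj = 3 := by omega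
      subst hjj3
      have e : ((3 + 1 : ℕ) : Fin n) = ((4 : ℕ) : Fin n) := by norm_num
      rwa [e] at h3
  -- iterate
  have iter : ∀ x : Fin n, c x = 3 → ∀ k : ℕ, c (x + ((4 * k : ℕ) : Fin n)) = 3 := by
    intro x hx k
    induction k with
    | zero => simpa using hx
    | succ k ih =>
      have := step4 _ ih
      have e : x + ((4 * k : ℕ) : Fin n) + ((4 : ℕ) : Fin n) = x + ((4 * (k + 1) : ℕ) : Fin n) := by
        rw [show 4 * (k + 1) = 4 * k + 4 from by omega]
        push_cast; ring
      rwa [e] at this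
  -- get some vertex of color 3
  obtain ⟨jj, hjj, h3⟩ := window 0
  set x0 := (0 : Fin n) + ((jj + 1 : ℕ) : Fin n) with hx0
  -- find k with 4 * k % n = 2
  have hk : ∃ k : ℕ, 4 * k % n = 2 := by
    rcases Nat.lt_or_ge (n % 2) 1 with h | h
    · -- n even, n % 4 = 2
      have h2 : n % 4 = 2 := by omega
      refine ⟨(n + 2) / 4, ?_⟩
      rw [show 4 * ((n + 2) / 4) = n * 1 + 2 from by omega, Nat.mul_add_mod,
        Nat.mod_eq_of_lt (by omega)]
    · -- n odd
      have h2 : n % 2 = 1 := by omega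
      refine ⟨(n + 1) / 2, ?_⟩
      rw [show 4 * ((n + 1) / 2) = n * 2 + 2 from by omega, Nat.mul_add_mod,
        Nat.mod_eq_of_lt (by omega)]
  obtain ⟨k, hk2⟩ := hk
  have h32 := iter x0 h3 k
  have e : ((4 * k : ℕ) : Fin n) = ((2 : ℕ) : Fin n) := by
    apply Fin.ext
    rw [Fin.val_natCast, Fin.val_natCast, hk2, Nat.mod_eq_of_lt (by omega)]
  rw [e] at h32
  have := same_lt x0 2 (by omega) (by omega) (by rw [h3, h32])
  omega

theorem S_lower [NeZero n] (hn : 3 ≤ n) (hA : IsOrientation (cycleGraph n) A)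
    (k : ℕ) (hk : ∃ c, IsDPackingColoring A k c) : 2 ≤ k := by
  obtain ⟨c, hc⟩ := hk
  by_contra h
  have hb0 := hc.1 0
  have hb1 := hc.1 (0 + 1)
  have hne : (0 : Fin n) ≠ 0 + 1 := by
    intro he
    have h0 : (0 + 1 : Fin n) - 0 = 0 := by rw [← he]; ring
    rw [add_sub_cancel_left] at h0
    have : ((1 : Fin n)).val = 0 := by rw [h0, Fin.val_zero]
    rw [Fin.val_one'] at this
    have h2 : 1 % n = 1 := Nat.mod_eq_of_lt (by omega)
    omega
  have hcc : c 0 = c (0 + 1) := by omega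
  have hlt := hc.2 0 (0 + 1) hne hcc
  have hdp : DPath A 1 (0 : Fin n) (0 + 1) ∨ DPath A 1 (0 + 1) (0 : Fin n) := by
    rcases arc_total hn hA 0 with h | h
    · exact Or.inl ⟨0 + 1, h, rfl⟩
    · exact Or.inr ⟨0, h, rfl⟩
  have hwd := wdist_le hdp
  have hc1 : c 0 = 1 := by omega
  rw [hc1] at hlt
  have : (1 : ℕ∞) < 1 := by
    calc (1 : ℕ∞) < wdist A 0 (0 + 1) := by exact_mod_cast hlt
      _ ≤ ((1 : ℕ) : ℕ∞) := hwd
      _ = 1 := by norm_num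
  exact absurd this (by norm_num)

end DPackAux

open DPackAux

theorem dpacking_oriented_cycle (n : ℕ) (hn : 3 ≤ n) (A : Fin n → Fin n → Prop)
    (hA : IsOrientation (cycleGraph n) A) :
    2 ≤ dPackingChromaticNumber A ∧ dPackingChromaticNumber A ≤ 4 ∧
    (dPackingChromaticNumber A = 4 ↔
      (((∀ i : Fin n, A i (i + ⟨1, by omega⟩)) ∨ (∀ i : Fin n, A (i + ⟨1, by omega⟩) i)) ∧
        5 ≤ n ∧ n % 4 ≠ 0)) := by
  haveI : NeZero n := ⟨by omega⟩
  have h1 : (⟨1, by omega⟩ : Fin n) = 1 := by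
    apply Fin.ext
    rw [Fin.val_one']
    exact (Nat.mod_eq_of_lt (by omega)).symm
  simp only [h1]
  unfold dPackingChromaticNumber
  set S := {k | ∃ c, IsDPackingColoring A k c} with hS
  have h4S : 4 ∈ S := exists_coloring4 hn hA
  have hSne : S.Nonempty := ⟨4, h4S⟩
  have hmem := Nat.sInf_mem hSne
  refine ⟨S_lower hn hA _ hmem, Nat.sInf_le h4S, ?_, ?_⟩
  · -- sInf = 4 → RHS
    intro h4eq
    by_contra hR
    have h3 : 3 ∈ S := by
      rcases eq_or_ne (n % 4) 0 with h | h
      · exact exists_coloring3_mod4 hn h hA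
      · rcases Nat.lt_or_ge n 5 with h5 | h5
        · exact exists_coloring3_small hn (by omega) hA
        · have hnd : ¬ ((∀ i : Fin n, A i (i + 1)) ∨ (∀ i : Fin n, A (i + 1) i)) := by
            intro hd
            exact hR ⟨hd, h5, h⟩
          rw [not_or] at hnd
          obtain ⟨s, hs1, hs2⟩ := exists_source hn hA hnd.1 hnd.2
          exact exists_coloring3_source h5 hA hs1 hs2
    have := Nat.sInf_le h3
    omega
  · -- RHS → sInf = 4
    rintro ⟨hdir, hn5, hm4⟩
    refine le_antisymm (Nat.sInf_le h4S) ?_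
    by_contra h
    obtain ⟨c, hc⟩ := hmem
    have hc' : IsDPackingColoring A 3 c :=
      ⟨fun v => ⟨(hc.1 v).1, by have := (hc.1 v).2; omega⟩, hc.2⟩
    exact no_coloring3 hn5 hm4 hA hdir c hc'
end

section
/- For every orientation T⃗ of a tree T, the packing chromatic number of T⃗ is at most 3. -/
open SimpleGraph

open Classical in
noncomputable def wtW {V : Type*} (A : V → V → Prop) {T : SimpleGraph V} {a b : V}
    (p : T.Walk a b) : ℤ :=
  (p.darts.map fun d => if A d.toProd.1 d.toProd.2 then 1 else -1).sum

lemma wtW_append {V : Type*} (A : V → V → Prop) {T : SimpleGraph V} {a b c : V}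
    (p : T.Walk a b) (q : T.Walk b c) : wtW A (p.append q) = wtW A p + wtW A q := by
  simp [wtW, SimpleGraph.Walk.darts_append]

open Classical in
lemma wtW_cons {V : Type*} (A : V → V → Prop) {T : SimpleGraph V} {a b c : V}
    (h : T.Adj a b) (p : T.Walk b c) :
    wtW A (SimpleGraph.Walk.cons h p) = (if A a b then 1 else -1) + wtW A p := by
  simp [wtW]

theorem dpath_height {V : Type*} {A : V → V → Prop} {h : V → ℤ}
    (hstep : ∀ u v, A u v → h v = h u + 1) :
    ∀ (n : ℕ) (u v : V), DPath A n u v → h v = h u + n := by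
  intro n
  induction n with
  | zero => intro u v huv; cases huv; simp
  | succ n ih =>
    rintro u v ⟨w, haw, hd⟩
    have := ih w v hd
    have := hstep u w haw
    push_cast
    omega

theorem dpacking_oriented_tree {V : Type*} [Fintype V] (T : SimpleGraph V)
    (hT : T.IsTree) (A : V → V → Prop) (hA : IsOrientation T A) :
    dPackingChromaticNumber A ≤ 3 := by
  classical
  have hne : Nonempty V := hT.isConnected.nonempty
  obtain ⟨r⟩ := hne
  -- unique path from r
  set P : ∀ v, T.Walk r v := fun v => (hT.existsUnique_path r v).choose with hP
  have hPpath : ∀ v, (P v).IsPath := fun v => (hT.existsUnique_path r v).choose_spec.1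
  have hPuniq : ∀ v (q : T.Walk r v), q.IsPath → q = P v :=
    fun v q hq => (hT.existsUnique_path r v).choose_spec.2 q hq
  set h : V → ℤ := fun v => wtW A (P v) with hh
  have hstep : ∀ u v, A u v → h v = h u + 1 := by
    intro u v hAuv
    have hadj : T.Adj u v := (hA.2 u v).mpr (Or.inl hAuv)
    by_cases hv : v ∈ (P u).support
    · -- P u = (take to v) ++ (drop), and drop = single edge v-u
      have hspec := ((P u).take_spec hv).symm
      have htake : ((P u).takeUntil v hv).IsPath := (hPpath u).takeUntil hv
      have hdrop : ((P u).dropUntil v hv).IsPath := (hPpath u).dropUntil hv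
      have htake_eq : (P u).takeUntil v hv = P v := hPuniq v _ htake
      -- unique path v→u is the single edge
      have huniq := (hT.existsUnique_path v u)
      have hsingle : ((P u).dropUntil v hv) = SimpleGraph.Walk.cons hadj.symm SimpleGraph.Walk.nil := by
        have h1 : (SimpleGraph.Walk.cons hadj.symm (SimpleGraph.Walk.nil : T.Walk u u)).IsPath := by
          simp [SimpleGraph.Walk.cons_isPath_iff, hadj.ne']
        exact huniq.unique hdrop h1
      have := congrArg (wtW A) hspec
      rw [wtW_append, htake_eq, hsingle, wtW_cons] at this
      have hnAvu : ¬ A v u := hA.1 u v hAuv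
      simp only [hnAvu, if_false] at this
      simp only [hh]
      simp [wtW] at this ⊢
      omega
    · -- P v = (P u).concat hadj
      have hconcat : ((P u).concat hadj).IsPath := by
        rw [← SimpleGraph.Walk.isPath_reverse_iff, SimpleGraph.Walk.reverse_concat]
        rw [SimpleGraph.Walk.cons_isPath_iff]
        refine ⟨(hPpath u).reverse, ?_⟩
        simpa using hv
      have heq : (P u).concat hadj = P v := hPuniq v _ hconcat
      have := congrArg (wtW A) heq
      rw [SimpleGraph.Walk.concat_eq_append, wtW_append, wtW_cons] at this
      simp only [hAuv, if_true] at this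
      simp only [hh]
      simp [wtW] at this ⊢
      omega
  -- the coloring
  set c : V → ℕ := fun v =>
    if h v % 4 = 0 then 1 else if h v % 4 = 1 then 2 else if h v % 4 = 2 then 1 else 3
    with hc
  have hcol : IsDPackingColoring A 3 c := by
    constructor
    · intro v; simp only [hc]; split_ifs <;> omega
    · intro u v huv hcuv
      have key : ∀ m ∈ {m : ℕ∞ | ∃ n : ℕ, m = n ∧ (DPath A n u v ∨ DPath A n v u)},
          (c u : ℕ∞) + 1 ≤ m := by
        rintro m ⟨n, rfl, hd | hd⟩
        · have hn := dpath_height hstep n u v hd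
          have hn0 : n ≠ 0 := by
            rintro rfl; exact huv hd
          have : c u + 1 ≤ n := by
            have h4u : h u % 4 = 0 ∨ h u % 4 = 1 ∨ h u % 4 = 2 ∨ h u % 4 = 3 := by omega
            have h4v : h v % 4 = 0 ∨ h v % 4 = 1 ∨ h v % 4 = 2 ∨ h v % 4 = 3 := by omega
            simp only [hc] at hcuv ⊢
            split_ifs at hcuv ⊢ <;> omega
          calc ((c u : ℕ∞) + 1) = ((c u + 1 : ℕ) : ℕ∞) := by push_cast; ring
          _ ≤ (n : ℕ∞) := by exact_mod_cast this
        · have hn := dpath_height hstep n v u hd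
          have hn0 : n ≠ 0 := by
            rintro rfl; exact huv hd.symm
          have : c u + 1 ≤ n := by
            simp only [hc] at hcuv ⊢
            split_ifs at hcuv ⊢ <;> omega
          calc ((c u : ℕ∞) + 1) = ((c u + 1 : ℕ) : ℕ∞) := by push_cast; ring
          _ ≤ (n : ℕ∞) := by exact_mod_cast this
      have hle : (c u : ℕ∞) + 1 ≤ wdist A u v := le_sInf key
      have hlt : (c u : ℕ∞) < (c u : ℕ∞) + 1 := by
        exact (ENat.lt_add_one_iff (ENat.coe_ne_top _)).mpr le_rfl
      exact lt_of_lt_of_le hlt hle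
  exact Nat.sInf_le ⟨c, hcol⟩
end
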